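/- Uniqueness of the resonant site: let α ∈ DC(κ,τ), 0 < σ < 1/6, ρ ∈ ℝ, N = (2/(r−r'))·|ln ε|, and suppose ε satisfies |ln ε|^τ · ε^σ ≤ κ(r−r')^τ/2^{τ+1} and ε^{σ/τ} is small enough that 2^{−1/τ}κ^{1/τ}ε^{−σ/τ} − N > 2N². If n* ∈ ℤ^d with 0 < |n*| ≤ N satisfies inf_{j∈ℤ}|2ρ − ⟨n*,α⟩ − 2πj| < ε^σ, then any other n' ∈ ℤ^d with n' ≠ n* satisfying inf_{j∈ℤ}|2ρ − ⟨n',α⟩ − 2πj| < ε^σ must have |n'| > 2N². -/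
import Mathlib


open Real

/-- Uniqueness of the resonant site: under the Diophantine condition and the
smallness conditions on ε, if `n*` is an ε^σ-resonant site with `0 < |n*| ≤ N`,
then any other ε^σ-resonant site `n' ≠ n*` satisfies `|n'| > 2N²`. -/
theorem stmt_4 (d : ℕ) (κ τ σ r r' ε ρ : ℝ) (α : Fin d → ℝ)
    (hκ : 0 < κ) (hτ : (d : ℝ) < τ) (hσ : 0 < σ) (hσ' : σ < 1 / 6)
    (hr' : 0 < r') (hr : r' < r) (hε : 0 < ε) (hε1 : ε < 1)
    (hDC : ∀ n : Fin d → ℤ, n ≠ 0 →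
      ∀ j : ℤ, κ / (∑ i, |(n i : ℝ)|) ^ τ < |(∑ i, (n i : ℝ) * α i) - 2 * π * j|)
    (N : ℝ) (hN : N = 2 / (r - r') * |Real.log ε|)
    (hsmall : |Real.log ε| ^ τ * ε ^ σ ≤ κ * (r - r') ^ τ / 2 ^ (τ + 1))
    (hsep : 2 * N ^ 2 < 2 ^ (-1 / τ) * κ ^ (1 / τ) * ε ^ (-σ / τ) - N)
    (nstar : Fin d → ℤ) (hnstar0 : nstar ≠ 0) (hnstarN : (∑ i, |(nstar i : ℝ)|) ≤ N)
    (hres : ∃ j : ℤ, |2 * ρ - (∑ i, (nstar i : ℝ) * α i) - 2 * π * j| < ε ^ σ) :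
    ∀ n' : Fin d → ℤ, n' ≠ nstar →
      (∃ j : ℤ, |2 * ρ - (∑ i, (n' i : ℝ) * α i) - 2 * π * j| < ε ^ σ) →
      2 * N ^ 2 < ∑ i, |(n' i : ℝ)| := by
  have hτ0 : 0 < τ := lt_of_le_of_lt (Nat.cast_nonneg d) hτ
  intro n' hne hres'
  obtain ⟨j, hj⟩ := hres
  obtain ⟨j', hj'⟩ := hres'
  set m : Fin d → ℤ := n' - nstar with hm
  have hm0 : m ≠ 0 := sub_ne_zero.mpr hne
  have hsum : (∑ i, (m i : ℝ) * α i) = (∑ i, (n' i : ℝ) * α i) - ∑ i, (nstar i : ℝ) * α i := by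
    rw [← Finset.sum_sub_distrib]
    refine Finset.sum_congr rfl fun i _ => ?_
    simp [hm, sub_mul]
  have key : |(∑ i, (m i : ℝ) * α i) - 2 * π * (j - j' : ℤ)| < 2 * ε ^ σ := by
    have : (∑ i, (m i : ℝ) * α i) - 2 * π * (j - j' : ℤ)
        = (2 * ρ - (∑ i, (nstar i : ℝ) * α i) - 2 * π * j)
          - (2 * ρ - (∑ i, (n' i : ℝ) * α i) - 2 * π * j') := by
      push_cast
      rw [hsum]; ring
    rw [this]
    calc |_| ≤ _ + _ := abs_sub _ _
      _ < ε ^ σ + ε ^ σ := add_lt_add hj hj'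
      _ = 2 * ε ^ σ := by ring
  have hDCm := hDC m hm0 (j - j')
  set S : ℝ := ∑ i, |(m i : ℝ)| with hS
  have hS1 : 1 ≤ S := by
    obtain ⟨i, hi⟩ := Function.ne_iff.mp hm0
    have h1 : (1 : ℝ) ≤ |(m i : ℝ)| := by
      have : 1 ≤ |m i| := Int.one_le_abs (by simpa using hi)
      exact_mod_cast (by push_cast; exact_mod_cast this : (1:ℝ) ≤ |(m i : ℤ)|)
    calc (1:ℝ) ≤ |(m i : ℝ)| := h1
      _ ≤ S := Finset.single_le_sum (f := fun i => |(m i : ℝ)|) (fun i _ => abs_nonneg _) (Finset.mem_univ i)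
  have hS0 : 0 < S := lt_of_lt_of_le one_pos hS1
  have hεσ : 0 < ε ^ σ := Real.rpow_pos_of_pos hε σ
  have hlt : κ / S ^ τ < 2 * ε ^ σ := lt_trans hDCm key
  have hSτ : κ / (2 * ε ^ σ) < S ^ τ := by
    have hSτ0 : 0 < S ^ τ := Real.rpow_pos_of_pos hS0 τ
    rw [div_lt_iff₀ (by positivity)] at hlt ⊢
    nlinarith [hlt]
  have hSbig : 2 ^ (-1 / τ) * κ ^ (1 / τ) * ε ^ (-σ / τ) < S := by
    have h1 : (κ / (2 * ε ^ σ)) ^ (1 / τ) < (S ^ τ) ^ (1 / τ) :=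
      Real.rpow_lt_rpow (by positivity) hSτ (by positivity)
    have h2 : (S ^ τ) ^ (1 / τ) = S := by
      rw [← Real.rpow_mul hS0.le, mul_one_div, div_self hτ0.ne', Real.rpow_one]
    have h3 : (κ / (2 * ε ^ σ)) ^ (1 / τ) = 2 ^ (-1 / τ) * κ ^ (1 / τ) * ε ^ (-σ / τ) := by
      rw [Real.div_rpow hκ.le (by positivity), Real.mul_rpow (by norm_num) hεσ.le,
        ← Real.rpow_mul hε.le, mul_one_div, neg_div, Real.rpow_neg (by norm_num : (0:ℝ) ≤ 2),
        neg_div, Real.rpow_neg hε.le, div_eq_mul_inv, mul_inv]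
      ring
    rw [h2, h3] at h1
    exact h1
  have htri : S ≤ (∑ i, |(n' i : ℝ)|) + ∑ i, |(nstar i : ℝ)| := by
    rw [← Finset.sum_add_distrib]
    refine Finset.sum_le_sum fun i _ => ?_
    simp only [hm]
    calc |((n' i - nstar i : ℤ) : ℝ)| = |(n' i : ℝ) - (nstar i : ℝ)| := by push_cast; rfl
      _ ≤ |(n' i : ℝ)| + |(nstar i : ℝ)| := abs_sub _ _
  linarith
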